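/- Let (a_n)_{n≥1} be a sequence with 0 < a_n < 1 uniformly distributed modulo one. Then (1/n) · ∑_{r=1}^n e^{H_r} / (r(1 + a_r^2)) → π e^γ / 4 as n → ∞. -/

import Mathlib

open Filter Finset Real

/-- `x ↦ 1/(1+x²)` is 1-Lipschitz on nonnegative reals. -/
lemma udm_lip {x y : ℝ} (hx : 0 ≤ x) (hy : 0 ≤ y) :
    |1 / (1 + x ^ 2) - 1 / (1 + y ^ 2)| ≤ |x - y| := by
  have h1 : (0:ℝ) < 1 + x ^ 2 := by positivity
  have h2 : (0:ℝ) < 1 + y ^ 2 := by positivity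
  rw [div_sub_div _ _ h1.ne' h2.ne', abs_div, abs_of_pos (mul_pos h1 h2),
    div_le_iff₀ (mul_pos h1 h2)]
  have key : |1 * (1 + y ^ 2) - (1 + x ^ 2) * 1| = |x - y| * (x + y) := by
    have : 1 * (1 + y ^ 2) - (1 + x ^ 2) * 1 = (y - x) * (y + x) := by ring
    rw [this, abs_mul, abs_sub_comm, abs_of_nonneg (by linarith : (0:ℝ) ≤ y + x)]
    ring_nf
  rw [key]
  have hxy : x + y ≤ (1 + x ^ 2) * (1 + y ^ 2) := by
    nlinarith [sq_nonneg (2*x - 1), sq_nonneg (2*y - 1), sq_nonneg (x*y), mul_nonneg hx hy]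
  exact mul_le_mul_of_nonneg_left hxy (abs_nonneg _)

/-- Equidistribution implies the Weyl limit for `1/(1+x²)`. -/
lemma udm_weyl (a : ℕ → ℝ) (ha : ∀ n, 1 ≤ n → 0 < a n ∧ a n < 1)
    (hud : ∀ α β : ℝ, 0 ≤ α → α < β → β ≤ 1 →
      Tendsto (fun n : ℕ =>
          (((Finset.Icc 1 n).filter fun r => α ≤ a r ∧ a r < β).card : ℝ) / n)
        atTop (nhds (β - α))) :
    Tendsto (fun n : ℕ => (∑ r ∈ Finset.Icc 1 n, 1 / (1 + (a r) ^ 2)) / (n : ℝ))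
      atTop (nhds (π / 4)) := by
  set f : ℝ → ℝ := fun x => 1 / (1 + x ^ 2) with hf
  have fcont : Continuous f := by
    apply continuous_const.div (by continuity)
    intro x; positivity
  rw [Metric.tendsto_atTop]
  intro ε hε
  obtain ⟨m, hmgt⟩ : ∃ m : ℕ, 3 / ε < m := exists_nat_gt _
  have hm0 : (0:ℝ) < m := lt_of_le_of_lt (by positivity) hmgt
  have hm0' : 0 < m := by exact_mod_cast hm0
  have h3m : 3 / (m:ℝ) < ε := by
    rw [div_lt_iff₀ hm0]
    rw [div_lt_iff₀ hε] at hmgt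
    linarith
  -- the classes
  set C : ℕ → ℕ → Finset ℕ := fun k n =>
    (Finset.Icc 1 n).filter (fun r => (k:ℝ)/m ≤ a r ∧ a r < ((k:ℝ)+1)/m) with hC
  -- partition identity
  have hpart : ∀ (n : ℕ) (g : ℕ → ℝ),
      ∑ r ∈ Finset.Icc 1 n, g r = ∑ k ∈ Finset.range m, ∑ r ∈ C k n, g r := by
    intro n g
    rw [← Finset.sum_fiberwise_of_maps_to
      (g := fun r => (⌊(m:ℝ) * a r⌋).toNat) (t := Finset.range m) ?_ g]
    · refine Finset.sum_congr rfl (fun k hk => ?_)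
      refine Finset.sum_congr ?_ (fun _ _ => rfl)
      refine Finset.filter_congr (fun r hr => ?_)
      obtain ⟨har0, har1⟩ := ha r (Finset.mem_Icc.1 hr).1
      have hfl0 : 0 ≤ ⌊(m:ℝ) * a r⌋ := Int.floor_nonneg.2 (by positivity)
      have htn := Int.toNat_of_nonneg hfl0
      have heq : (⌊(m:ℝ) * a r⌋).toNat = k ↔ ⌊(m:ℝ) * a r⌋ = (k:ℤ) := by
        omega
      rw [heq, Int.floor_eq_iff, div_le_iff₀ hm0, lt_div_iff₀ hm0]
      push_cast
      constructor
      · rintro ⟨h1, h2⟩; constructor <;> nlinarith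
      · rintro ⟨h1, h2⟩; constructor <;> nlinarith
    · intro r hr
      obtain ⟨har0, har1⟩ := ha r (Finset.mem_Icc.1 hr).1
      have : ⌊(m:ℝ) * a r⌋ < (m:ℤ) := Int.floor_lt.2 (by push_cast; nlinarith)
      have hfl0 : 0 ≤ ⌊(m:ℝ) * a r⌋ := Int.floor_nonneg.2 (by positivity)
      have htn := Int.toNat_of_nonneg hfl0
      simp only [Finset.mem_range]
      omega
  -- counting
  have hcount : ∀ n : ℕ, (∑ k ∈ Finset.range m, ((C k n).card : ℝ)) = n := by
    intro n
    have := hpart n (fun _ => (1:ℝ))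
    simp only [Finset.sum_const, nsmul_eq_mul, mul_one, Nat.card_Icc] at this
    rw [← this]
    push_cast
    ring_nf
  -- limit of the step average
  set S : ℝ := ∑ k ∈ Finset.range m, f ((k:ℝ)/m) * (1/m) with hS
  have hB : Tendsto (fun n : ℕ =>
      ∑ k ∈ Finset.range m, f ((k:ℝ)/m) * (((C k n).card : ℝ) / n)) atTop (nhds S) := by
    rw [hS]
    refine tendsto_finset_sum _ (fun k hk => ?_)
    have hk' : k < m := Finset.mem_range.1 hk
    have h1 : (0:ℝ) ≤ (k:ℝ)/m := by positivity
    have h2 : (k:ℝ)/m < ((k:ℝ)+1)/m := by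
      rw [div_lt_div_iff₀ hm0 hm0]; nlinarith
    have h3 : ((k:ℝ)+1)/m ≤ 1 := by
      rw [div_le_one hm0]; exact_mod_cast hk'
    have := (hud _ _ h1 h2 h3).const_mul (f ((k:ℝ)/m))
    have heq : ((k:ℝ)+1)/m - (k:ℝ)/m = 1/m := by ring
    rw [heq] at this
    exact this
  -- |A n - B n| ≤ 1/m
  have key : ∀ n : ℕ, 1 ≤ n →
      |(∑ r ∈ Finset.Icc 1 n, f (a r)) / (n:ℝ)
        - ∑ k ∈ Finset.range m, f ((k:ℝ)/m) * (((C k n).card : ℝ) / n)| ≤ 1/m := by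
    intro n hn
    have hn0 : (0:ℝ) < n := by exact_mod_cast hn
    have e1 : (∑ r ∈ Finset.Icc 1 n, f (a r)) / (n:ℝ)
        - ∑ k ∈ Finset.range m, f ((k:ℝ)/m) * (((C k n).card : ℝ) / n)
        = (∑ k ∈ Finset.range m, ∑ r ∈ C k n, (f (a r) - f ((k:ℝ)/m))) / n := by
      have inner : ∀ k, ∑ r ∈ C k n, (f (a r) - f ((k:ℝ)/m))
          = (∑ r ∈ C k n, f (a r)) - (C k n).card * f ((k:ℝ)/m) := fun k => by
        rw [Finset.sum_sub_distrib, Finset.sum_const, nsmul_eq_mul]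
      rw [hpart n (fun r => f (a r))]
      simp_rw [inner]
      rw [Finset.sum_sub_distrib, sub_div]
      congr 1
      rw [Finset.sum_div]
      refine Finset.sum_congr rfl (fun k _ => ?_)
      ring
    rw [e1, abs_div, abs_of_pos hn0, div_le_iff₀ hn0]
    calc |∑ k ∈ Finset.range m, ∑ r ∈ C k n, (f (a r) - f ((k:ℝ)/m))|
        ≤ ∑ k ∈ Finset.range m, |∑ r ∈ C k n, (f (a r) - f ((k:ℝ)/m))| :=
          Finset.abs_sum_le_sum_abs _ _
      _ ≤ ∑ k ∈ Finset.range m, ∑ r ∈ C k n, |f (a r) - f ((k:ℝ)/m)| :=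
          Finset.sum_le_sum (fun k _ => Finset.abs_sum_le_sum_abs _ _)
      _ ≤ ∑ k ∈ Finset.range m, ∑ r ∈ C k n, (1/(m:ℝ)) := by
          refine Finset.sum_le_sum (fun k _ => Finset.sum_le_sum (fun r hr => ?_))
          rw [hC] at hr
          simp only [Finset.mem_filter] at hr
          obtain ⟨hr1, hr2, hr3⟩ := hr
          obtain ⟨har0, har1⟩ := ha r (Finset.mem_Icc.1 hr1).1
          have h0k : (0:ℝ) ≤ (k:ℝ)/m := by positivity
          calc |f (a r) - f ((k:ℝ)/m)| ≤ |a r - (k:ℝ)/m| := udm_lip har0.le h0k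
            _ ≤ 1/(m:ℝ) := by
                rw [abs_of_nonneg (by linarith)]
                have : a r < (k:ℝ)/m + 1/m := by
                  rw [← add_div]; linarith
                linarith
      _ = (1/(m:ℝ)) * n := by
          simp only [Finset.sum_const, nsmul_eq_mul]
          rw [← Finset.sum_mul, hcount n]; ring
    
  -- |S - π/4| ≤ 1/m
  have hSpi : |S - π/4| ≤ 1/m := by
    have hintg : ∀ (u v : ℝ), IntervalIntegrable f MeasureTheory.volume u v :=
      fun u v => fcont.intervalIntegrable u v
    have hadj : ∑ k ∈ Finset.range m, (∫ x in ((k:ℝ)/m)..(((k+1:ℕ)):ℝ)/m, f x)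
        = ∫ x in ((0:ℕ):ℝ)/m..((m:ℕ):ℝ)/m, f x := by
      exact intervalIntegral.sum_integral_adjacent_intervals (fun k _ => hintg _ _)
    have hpi : (∫ x in ((0:ℕ):ℝ)/m..((m:ℕ):ℝ)/m, f x) = π/4 := by
      rw [show ((0:ℕ):ℝ)/m = (0:ℝ) by simp, show ((m:ℕ):ℝ)/m = (1:ℝ) by
        rw [div_self hm0.ne']]
      simp only [hf, one_div]
      rw [integral_inv_one_add_sq, arctan_one, arctan_zero, sub_zero]
    rw [hS, ← hpi, ← hadj, ← Finset.sum_sub_distrib]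
    calc |∑ k ∈ Finset.range m,
          (f ((k:ℝ)/m) * (1/(m:ℝ)) - ∫ x in ((k:ℝ)/m)..(((k+1:ℕ)):ℝ)/m, f x)|
        ≤ ∑ k ∈ Finset.range m,
          |f ((k:ℝ)/m) * (1/(m:ℝ)) - ∫ x in ((k:ℝ)/m)..(((k+1:ℕ)):ℝ)/m, f x| :=
          Finset.abs_sum_le_sum_abs _ _
      _ ≤ ∑ k ∈ Finset.range m, (1/(m:ℝ)) * (1/(m:ℝ)) := by
          refine Finset.sum_le_sum (fun k _ => ?_)
          have hk1 : (((k+1:ℕ)):ℝ)/m = ((k:ℝ)+1)/m := by push_cast; ring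
          have hle : (k:ℝ)/m ≤ ((k:ℝ)+1)/m := by
            rw [div_le_div_iff₀ hm0 hm0]; nlinarith
          have hconst : f ((k:ℝ)/m) * (1/(m:ℝ))
              = ∫ _ in ((k:ℝ)/m)..(((k+1:ℕ)):ℝ)/m, f ((k:ℝ)/m) := by
            rw [intervalIntegral.integral_const, smul_eq_mul, hk1]
            rw [show ((k:ℝ)+1)/m - (k:ℝ)/m = 1/m by ring]
            ring
          rw [hconst, ← intervalIntegral.integral_sub (intervalIntegrable_const) (hintg _ _)]
          have := intervalIntegral.norm_integral_le_of_norm_le_const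
            (a := (k:ℝ)/m) (b := (((k+1:ℕ)):ℝ)/m) (C := 1/(m:ℝ))
            (f := fun x => f ((k:ℝ)/m) - f x) ?_
          · rw [Real.norm_eq_abs] at this
            refine this.trans ?_
            rw [hk1, show ((k:ℝ)+1)/m - (k:ℝ)/m = 1/m by ring,
              abs_of_nonneg (by positivity : (0:ℝ) ≤ 1/(m:ℝ))]
          · intro x hx
            rw [hk1, Set.uIoc_of_le hle] at hx
            obtain ⟨hx1, hx2⟩ := hx
            have h0k : (0:ℝ) ≤ (k:ℝ)/m := by positivity
            have h0x : (0:ℝ) ≤ x := le_trans h0k hx1.le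
            rw [Real.norm_eq_abs]
            calc |f ((k:ℝ)/m) - f x| ≤ |(k:ℝ)/m - x| := udm_lip h0k h0x
              _ ≤ 1/(m:ℝ) := by
                  rw [abs_of_nonpos (by linarith), neg_sub]
                  have : ((k:ℝ)+1)/m = (k:ℝ)/m + 1/m := by ring
                  linarith [this ▸ hx2]
      _ = (m:ℝ) * ((1/(m:ℝ)) * (1/(m:ℝ))) := by
          rw [Finset.sum_const, Finset.card_range, nsmul_eq_mul]
      _ = 1/(m:ℝ) := by field_simp
  -- assemble
  have hε2 : 0 < ε - 2/m := by
    have : 2/(m:ℝ) < 3/(m:ℝ) := by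
      rw [div_lt_div_iff₀ hm0 hm0]; nlinarith
    linarith
  rw [Metric.tendsto_atTop] at hB
  obtain ⟨N, hN⟩ := hB (ε - 2/m) hε2
  refine ⟨max N 1, fun n hn => ?_⟩
  have hn1 : 1 ≤ n := le_trans (le_max_right _ _) hn
  have hnN : N ≤ n := le_trans (le_max_left _ _) hn
  have h1 := key n hn1
  have h2 := hN n hnN
  rw [Real.dist_eq] at h2 ⊢
  calc |(∑ r ∈ Finset.Icc 1 n, f (a r)) / (n:ℝ) - π/4|
      ≤ |(∑ r ∈ Finset.Icc 1 n, f (a r)) / (n:ℝ)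
          - ∑ k ∈ Finset.range m, f ((k:ℝ)/m) * (((C k n).card : ℝ) / n)|
        + |(∑ k ∈ Finset.range m, f ((k:ℝ)/m) * (((C k n).card : ℝ) / n)) - S|
        + |S - π/4| := by
        have := abs_sub_le ((∑ r ∈ Finset.Icc 1 n, f (a r)) / (n:ℝ))
          (∑ k ∈ Finset.range m, f ((k:ℝ)/m) * (((C k n).card : ℝ) / n)) (π/4)
        have := abs_sub_le (∑ k ∈ Finset.range m, f ((k:ℝ)/m) * (((C k n).card : ℝ) / n))
          S (π/4)
        linarith [abs_sub_le ((∑ r ∈ Finset.Icc 1 n, f (a r)) / (n:ℝ))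
          (∑ k ∈ Finset.range m, f ((k:ℝ)/m) * (((C k n).card : ℝ) / n)) (π/4),
          abs_sub_le (∑ k ∈ Finset.range m, f ((k:ℝ)/m) * (((C k n).card : ℝ) / n)) S (π/4)]
    _ < 1/m + (ε - 2/m) + 1/m := by
        apply add_lt_add_of_lt_of_le (add_lt_add_of_le_of_lt h1 h2) hSpi
    _ ≤ ε := by
        have : 1/(m:ℝ) + 1/(m:ℝ) ≤ 2/(m:ℝ) := by
          rw [← add_div]; norm_num
        linarith

theorem sum_exp_harmonic_div_tendsto_pi_exp_gamma
    (a : ℕ → ℝ) (ha : ∀ n, 1 ≤ n → 0 < a n ∧ a n < 1)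
    (hud : ∀ α β : ℝ, 0 ≤ α → α < β → β ≤ 1 →
      Tendsto (fun n : ℕ =>
          (((Finset.Icc 1 n).filter fun r => α ≤ a r ∧ a r < β).card : ℝ) / n)
        atTop (nhds (β - α)))
    (H : ℕ → ℝ) (hH : ∀ r, H r = ∑ k ∈ Finset.Icc 1 r, (1 : ℝ) / k) :
    Tendsto (fun n : ℕ =>
        (1 / (n : ℝ)) *
          ∑ r ∈ Finset.Icc 1 n, Real.exp (H r) / (r * (1 + (a r) ^ 2)))
      atTop (nhds (π * Real.exp Real.eulerMascheroniConstant / 4)) := by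
  set γ := Real.eulerMascheroniConstant with hγ
  set c : ℕ → ℝ := fun r => Real.exp (H r) / r with hc
  have hceq : ∀ r : ℕ, 1 ≤ r → c r = Real.exp ((harmonic r : ℝ) - Real.log r) := by
    intro r hr
    have hr0 : (0:ℝ) < r := by exact_mod_cast hr
    have hHr : H r = (harmonic r : ℝ) := by
      rw [hH, harmonic_eq_sum_Icc]
      push_cast
      simp [one_div]
    rw [hc]
    simp only
    rw [hHr, Real.exp_sub, Real.exp_log hr0]
  have hctend : Tendsto c atTop (nhds (Real.exp γ)) := by
    have h1 := Real.tendsto_harmonic_sub_log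
    have h2 : Tendsto (fun r : ℕ => Real.exp ((harmonic r : ℝ) - Real.log r)) atTop
        (nhds (Real.exp γ)) := (Real.continuous_exp.tendsto _).comp h1
    apply h2.congr'
    filter_upwards [eventually_ge_atTop 1] with r hr
    exact (hceq r hr).symm
  have hA := udm_weyl a ha hud
  -- error term via Cesàro
  have hD : Tendsto (fun n : ℕ =>
      (∑ r ∈ Finset.Icc 1 n, (c r - Real.exp γ) * (1 / (1 + (a r) ^ 2))) / (n:ℝ))
      atTop (nhds 0) := by
    have hu : Tendsto (fun i : ℕ => |c (1 + i) - Real.exp γ|) atTop (nhds 0) := by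
      have h0 : Tendsto (fun i : ℕ => c (1 + i)) atTop (nhds (Real.exp γ)) :=
        hctend.comp ((tendsto_add_atTop_nat 1).congr (fun n => by omega))
      have := (h0.sub_const (Real.exp γ)).abs
      simpa using this
    have hE := hu.cesaro
    apply squeeze_zero_norm _ hE
    intro n
    have hsum : ∑ r ∈ Finset.Icc 1 n, |c r - Real.exp γ|
        = ∑ i ∈ Finset.range n, |c (1 + i) - Real.exp γ| := by
      rw [← Finset.Ico_add_one_right_eq_Icc, Finset.sum_Ico_eq_sum_range]
      simp
    rw [Real.norm_eq_abs, abs_div, Nat.abs_cast, div_eq_mul_inv, mul_comm]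
    rw [← hsum]
    apply mul_le_mul_of_nonneg_left _ (by positivity)
    calc |∑ r ∈ Finset.Icc 1 n, (c r - Real.exp γ) * (1 / (1 + (a r) ^ 2))|
        ≤ ∑ r ∈ Finset.Icc 1 n, |(c r - Real.exp γ) * (1 / (1 + (a r) ^ 2))| :=
          Finset.abs_sum_le_sum_abs _ _
      _ ≤ ∑ r ∈ Finset.Icc 1 n, |c r - Real.exp γ| := by
          refine Finset.sum_le_sum (fun r _ => ?_)
          rw [abs_mul]
          have h1 : (0:ℝ) < 1 + (a r) ^ 2 := by positivity
          have h2 : |1 / (1 + (a r) ^ 2)| ≤ 1 := by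
            rw [abs_of_pos (by positivity)]
            rw [div_le_one h1]
            nlinarith [sq_nonneg (a r)]
          nlinarith [abs_nonneg (c r - Real.exp γ), abs_nonneg (1 / (1 + (a r) ^ 2))]
  -- combine
  have hcomb : Tendsto (fun n : ℕ =>
      Real.exp γ * ((∑ r ∈ Finset.Icc 1 n, 1 / (1 + (a r) ^ 2)) / (n:ℝ))
      + (∑ r ∈ Finset.Icc 1 n, (c r - Real.exp γ) * (1 / (1 + (a r) ^ 2))) / (n:ℝ))
      atTop (nhds (Real.exp γ * (π/4) + 0)) := (hA.const_mul _).add hD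
  have hfinal : π * Real.exp γ / 4 = Real.exp γ * (π/4) + 0 := by ring
  rw [hfinal]
  apply hcomb.congr
  intro n
  have hterm : ∀ r ∈ Finset.Icc 1 n,
      Real.exp (H r) / (r * (1 + (a r) ^ 2))
      = Real.exp γ * (1 / (1 + (a r) ^ 2)) + (c r - Real.exp γ) * (1 / (1 + (a r) ^ 2)) := by
    intro r hr
    rw [hc]
    simp only
    rw [div_mul_eq_div_div, div_eq_mul_one_div (Real.exp (H r) / r)]
    ring
  rw [Finset.sum_congr rfl hterm, Finset.sum_add_distrib, ← Finset.mul_sum]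
  ring
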